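/- arXiv:1310.7917 — 2 statements merged into one kernel-verified Lean document; each statement's English description precedes it below -/
import Mathlib

section
/- Let G = SL(2,ℂ) with the involution θ(g) = w·g·w⁻¹ where w = diag(i, −i) (the Cartan involution of SL(2,ℝ)). Then H¹_θ(ℤ/2, G) is trivial: every g ∈ SL(2,ℂ) with g·θ(g) = 1 can be written g = x·θ(x)⁻¹ for some x ∈ SL(2,ℂ). In particular, −I = n·θ(n⁻¹) for n the Weyl group representative [[0,1],[−1,0]]. -/
open Matrix Complex

set_option maxHeartbeats 1600000 in
/-- For `SL(2,ℂ)` with the Cartan involution `θ = Inn(diag(i,-i))` of `SL(2,ℝ)`,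
`H¹_θ(ℤ/2, G)` is trivial: every `g` with `g θ(g) = 1` is of the form
`x θ(x)⁻¹`.  In particular `-I = n θ(n⁻¹)` for `n = [[0,1],[-1,0]]`. -/
theorem h1_sl2R_trivial (w n : Matrix.SpecialLinearGroup (Fin 2) ℂ)
    (hw : (w : Matrix (Fin 2) (Fin 2) ℂ) = !![Complex.I, 0; 0, -Complex.I])
    (hn : (n : Matrix (Fin 2) (Fin 2) ℂ) = !![0, 1; -1, 0]) :
    (∀ g : Matrix.SpecialLinearGroup (Fin 2) ℂ,
      g * (w * g * w⁻¹) = 1 → ∃ x, g = x * (w * x * w⁻¹)⁻¹) ∧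
    ((n * (w * n⁻¹ * w⁻¹) : Matrix.SpecialLinearGroup (Fin 2) ℂ) :
        Matrix (Fin 2) (Fin 2) ℂ) = -1 := by
  constructor
  · intro g h
    have key : ∀ x : Matrix.SpecialLinearGroup (Fin 2) ℂ,
        (g : Matrix (Fin 2) (Fin 2) ℂ) * (w : Matrix (Fin 2) (Fin 2) ℂ) * x
          = (x : Matrix (Fin 2) (Fin 2) ℂ) * w → g = x * (w * x * w⁻¹)⁻¹ := by
      intro x hx
      have hx' : g * w * x = x * w := Subtype.ext (by
        simpa [Matrix.SpecialLinearGroup.coe_mul] using hx)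
      calc g = g * w * x * x⁻¹ * w⁻¹ := by group
        _ = x * w * x⁻¹ * w⁻¹ := by rw [hx']
        _ = x * (w * x * w⁻¹)⁻¹ := by group
    have h2 : g * w * g = w := by
      calc g * w * g = (g * (w * g * w⁻¹)) * w := by group
        _ = w := by rw [h]; group
    set a := (g : Matrix (Fin 2) (Fin 2) ℂ) 0 0 with ha
    set b := (g : Matrix (Fin 2) (Fin 2) ℂ) 0 1 with hb
    set c := (g : Matrix (Fin 2) (Fin 2) ℂ) 1 0 with hc
    set d := (g : Matrix (Fin 2) (Fin 2) ℂ) 1 1 with hd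
    have hg : (g : Matrix (Fin 2) (Fin 2) ℂ) = !![a, b; c, d] := Matrix.eta_fin_two _
    have hdet : a * d - b * c = 1 := by
      have := g.2
      rw [hg, Matrix.det_fin_two_of] at this
      exact this
    have hM : (!![a, b; c, d] * !![Complex.I, 0; 0, -Complex.I] * !![a, b; c, d]
        : Matrix (Fin 2) (Fin 2) ℂ) = !![Complex.I, 0; 0, -Complex.I] := by
      have := congrArg (Subtype.val) h2
      simpa [hw, hg] using this
    rw [Matrix.mul_fin_two, Matrix.mul_fin_two] at hM
    have hE := Matrix.ext_iff.mpr hM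
    have e00 := hE 0 0
    have e11 := hE 1 1
    simp at e00 e11
    -- e00 : a * I * a + -(b * I * c) = I
    -- e11 : c * I * b + -(d * I * d) = -I
    have h1 : a * a - b * c = 1 := by
      linear_combination (-Complex.I) * e00 + (a*a - b*c - 1) * Complex.I_mul_I
    have h4 : b * c - d * d = -1 := by
      linear_combination (-Complex.I) * e11 + (b*c - d*d + 1) * Complex.I_mul_I
    have had : d = a := by
      have hsq : (a - d) ^ 2 = 0 := by linear_combination h1 - h4 - 2 * hdet
      have h0 : a - d = 0 := pow_eq_zero_iff (n := 2) (by norm_num) |>.mp hsq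
      linear_combination -h0
    clear_value a b c d
    rw [had] at hg
    by_cases hb0 : b = 0
    · rw [hb0] at hg h1
      have haa : a * a = 1 := by linear_combination h1
      rcases mul_self_eq_one_iff.mp haa with h5 | h5 <;> rw [h5] at hg
      · refine ⟨⟨!![1, 0; c/2, 1], by simp [Matrix.det_fin_two_of]⟩, key _ ?_⟩
        rw [hg, hw]
        show (!![(1:ℂ), 0; c, 1] * !![Complex.I, 0; 0, -Complex.I]) * !![1, 0; c/2, 1]
          = !![(1:ℂ), 0; c/2, 1] * !![Complex.I, 0; 0, -Complex.I]
        rw [Matrix.mul_fin_two, Matrix.mul_fin_two, Matrix.mul_fin_two]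
        rw [← Matrix.ext_iff]
        intro i j
        fin_cases i <;> fin_cases j <;> (field_simp <;> ring)
      · refine ⟨⟨!![0, 2*Complex.I; Complex.I/2, -Complex.I*c], by
          rw [Matrix.det_fin_two_of]
          linear_combination -Complex.I_mul_I⟩, key _ ?_⟩
        rw [hg, hw]
        show (!![(-1:ℂ), 0; c, -1] * !![Complex.I, 0; 0, -Complex.I]) *
            !![0, 2*Complex.I; Complex.I/2, -Complex.I*c]
          = !![(0:ℂ), 2*Complex.I; Complex.I/2, -Complex.I*c] *
            !![Complex.I, 0; 0, -Complex.I]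
        rw [Matrix.mul_fin_two, Matrix.mul_fin_two, Matrix.mul_fin_two]
        rw [← Matrix.ext_iff]
        intro i j
        fin_cases i <;> fin_cases j <;> (field_simp <;> ring)
    · refine ⟨⟨!![-Complex.I*b, Complex.I/2;
          Complex.I*(1-a), Complex.I*(1+a)/(2*b)], by
        rw [Matrix.det_fin_two_of]
        field_simp
        linear_combination (-2) * Complex.I_mul_I⟩, key _ ?_⟩
      rw [hg, hw]
      show (!![a, b; c, a] * !![Complex.I, 0; 0, -Complex.I]) *
          !![-Complex.I*b, Complex.I/2; Complex.I*(1-a), Complex.I*(1+a)/(2*b)]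
        = !![-Complex.I*b, Complex.I/2; Complex.I*(1-a), Complex.I*(1+a)/(2*b)] *
          !![Complex.I, 0; 0, -Complex.I]
      rw [Matrix.mul_fin_two, Matrix.mul_fin_two, Matrix.mul_fin_two]
      rw [← Matrix.ext_iff]
      intro i j
      fin_cases i <;> fin_cases j <;>
        simp only [Matrix.cons_val', Matrix.cons_val_zero, Matrix.cons_val_one,
          Matrix.head_cons, Matrix.empty_val', Matrix.cons_val_fin_one, Matrix.head_fin_const,
          Fin.mk_zero, Fin.mk_one, Fin.isValue, Matrix.of_apply]
      · field_simp
        ring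
      · field_simp
        linear_combination
      · field_simp
        linear_combination (2*b*Complex.I) * h1
      · field_simp
        linear_combination (-Complex.I) * h1
  · have hninv : ((n⁻¹ : Matrix.SpecialLinearGroup (Fin 2) ℂ) : Matrix (Fin 2) (Fin 2) ℂ)
        = !![0, -1; 1, 0] := by
      rw [Matrix.SpecialLinearGroup.coe_inv, hn, Matrix.adjugate_fin_two]
      norm_num
    have hwinv : ((w⁻¹ : Matrix.SpecialLinearGroup (Fin 2) ℂ) : Matrix (Fin 2) (Fin 2) ℂ)
        = !![-Complex.I, 0; 0, Complex.I] := by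
      rw [Matrix.SpecialLinearGroup.coe_inv, hw, Matrix.adjugate_fin_two]
      norm_num
    simp only [Matrix.SpecialLinearGroup.coe_mul, hn, hw, hninv, hwinv, Matrix.mul_fin_two]
    norm_num
    ext i j
    fin_cases i <;> fin_cases j <;> simp [Complex.I_mul_I]
end

section
/- Let G be a group with involution θ, Z its center, δG = G ⋊ ⟨δ⟩ as above, and fix a strong involution x ∈ G·δ with z = x² ∈ Z. Let θ_x = Inn(x)|_G (an involutive automorphism of G). Then right multiplication y ↦ y·x⁻¹ gives a bijection from {y ∈ G·δ : y² = z} to {g ∈ G : g·θ_x(g) = 1}, which descends to a bijection between the set of G-conjugacy classes in {y ∈ G·δ : y² = z} and H¹_{θ_x}(ℤ/2, G). -/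
/-- `θ_x = Inn(x)` for a strong involution `x = ι g₀ * δ` restricted to `G`. -/
def thetaX {G : Type*} [Group G] (θ : G →* G) (g₀ : G) : G → G :=
  fun a => g₀ * θ a * g₀⁻¹

/-- Twisting by a strong involution `x` with `x² = z ∈ Z(G)`: `θ_x = Inn(x)|_G`
is an involution of `G`, and `y ↦ y x⁻¹` is a bijection from
`{y ∈ G δ : y² = z}` to `G^{-θ_x}` descending to a bijection between the set of
`G`-conjugacy classes of strong involutions of invariant `z` and
`H¹_{θ_x}(ℤ/2, G)`. -/
theorem fiber_of_invariant {G Gh : Type*} [Group G] [Group Gh]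
    (θ : G →* G) (hθ : ∀ g, θ (θ g) = g)
    (ι : G →* Gh) (hι : Function.Injective ι)
    (δ : Gh) (hδ : δ ^ 2 = 1) (hconj : ∀ g : G, δ * ι g * δ⁻¹ = ι (θ g))
    (g₀ z : G) (hz : z ∈ Subgroup.center G) (hx2 : (ι g₀ * δ) ^ 2 = ι z) :
    (∀ a : G, thetaX θ g₀ (thetaX θ g₀ a) = a) ∧
    (∀ a : G, ι (thetaX θ g₀ a) = (ι g₀ * δ) * ι a * (ι g₀ * δ)⁻¹) ∧
    (∀ y : Gh, ((∃ h : G, y = ι h * δ) ∧ y ^ 2 = ι z) ↔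
      ∃ a : G, a * thetaX θ g₀ a = 1 ∧ y * (ι g₀ * δ)⁻¹ = ι a) ∧
    ∃ e : Quot (fun p q : {y : Gh // (∃ h : G, y = ι h * δ) ∧ y ^ 2 = ι z} =>
            ∃ u : G, (q : Gh) = ι u * (p : Gh) * (ι u)⁻¹) ≃
          Quot (fun p q : {a : G // a * thetaX θ g₀ a = 1} =>
            ∃ u : G, (q : G) = u * (p : G) * (thetaX θ g₀ u)⁻¹),
      ∀ (p : {y : Gh // (∃ h : G, y = ι h * δ) ∧ y ^ 2 = ι z})
        (a : G) (h : a * thetaX θ g₀ a = 1),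
        (p : Gh) * (ι g₀ * δ)⁻¹ = ι a →
        e (Quot.mk _ p) = Quot.mk _ ⟨a, h⟩ := by
  have hδδ : δ * δ = 1 := by rw [← sq]; exact hδ
  have hδinv : δ⁻¹ = δ := inv_eq_of_mul_eq_one_right hδδ
  have hcomm : ∀ g : G, δ * ι g = ι (θ g) * δ := by
    intro g
    have h := hconj g
    rw [hδinv] at h
    calc δ * ι g = (δ * ι g * δ) * δ := by rw [mul_assoc, hδδ, mul_one]
    _ = ι (θ g) * δ := by rw [h]
  have hsq : ∀ h : G, (ι h * δ) ^ 2 = ι (h * θ h) := by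
    intro h
    have e1 : ι h * δ * (ι h * δ) = ι h * (δ * ι h) * δ := by group
    rw [sq, e1, hcomm, map_mul]
    calc ι h * (ι (θ h) * δ) * δ = ι h * ι (θ h) * (δ * δ) := by group
    _ = ι h * ι (θ h) := by rw [hδδ, mul_one]
  have hz0 : g₀ * θ g₀ = z := by
    apply hι
    rw [← hsq g₀, hx2]
  have hzc : ∀ g : G, g * z = z * g := fun g =>
    ((Subgroup.mem_center_iff.mp hz) g)
  -- Part 1
  have part1 : ∀ a : G, thetaX θ g₀ (thetaX θ g₀ a) = a := by
    intro a
    simp only [thetaX, map_mul, map_inv, hθ]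
    have : g₀ * (θ g₀ * a * (θ g₀)⁻¹) * g₀⁻¹
        = (g₀ * θ g₀) * a * (g₀ * θ g₀)⁻¹ := by group
    rw [this, hz0, ← hzc, mul_inv_cancel_right]
  -- Part 2
  have part2 : ∀ a : G, ι (thetaX θ g₀ a) = (ι g₀ * δ) * ι a * (ι g₀ * δ)⁻¹ := by
    intro a
    have e1 : (ι g₀ * δ) * ι a * (ι g₀ * δ)⁻¹ = ι g₀ * (δ * ι a * δ⁻¹) * (ι g₀)⁻¹ := by
      group
    rw [e1, hconj, ← map_inv, ← map_mul, ← map_mul]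
    rfl
  -- Part 3
  have part3 : ∀ y : Gh, ((∃ h : G, y = ι h * δ) ∧ y ^ 2 = ι z) ↔
      ∃ a : G, a * thetaX θ g₀ a = 1 ∧ y * (ι g₀ * δ)⁻¹ = ι a := by
    intro y
    constructor
    · rintro ⟨⟨h, rfl⟩, hy2⟩
      refine ⟨h * g₀⁻¹, ?_, ?_⟩
      · have hh : h * θ h = z := by
          apply hι; rw [← hsq h, hy2]
        simp only [thetaX, map_mul, map_inv]
        calc h * g₀⁻¹ * (g₀ * (θ h * (θ g₀)⁻¹) * g₀⁻¹)
            = (h * θ h) * (g₀ * θ g₀)⁻¹ := by group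
        _ = z * z⁻¹ := by rw [hh, hz0]
        _ = 1 := mul_inv_cancel z
      · rw [map_mul, map_inv, mul_inv_rev, hδinv]
        calc ι h * δ * (δ * (ι g₀)⁻¹) = ι h * (δ * δ) * (ι g₀)⁻¹ := by group
        _ = ι h * (ι g₀)⁻¹ := by rw [hδδ, mul_one]
    · rintro ⟨a, ha, hyx⟩
      have hy : y = ι a * (ι g₀ * δ) := by
        rw [← hyx]; group
      constructor
      · exact ⟨a * g₀, by rw [hy, map_mul]; group⟩
      · have hy' : y = ι (a * g₀) * δ := by rw [hy, map_mul]; group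
        rw [hy', hsq]
        apply congrArg
        have : a * g₀ * θ (a * g₀) = (a * (g₀ * θ a * g₀⁻¹)) * (g₀ * θ g₀) := by
          rw [map_mul]; group
        rw [this]
        have ha' : a * (g₀ * θ a * g₀⁻¹) = 1 := ha
        rw [ha', one_mul, hz0]
  refine ⟨part1, part2, part3, ?_⟩
  -- Part 4
  set x : Gh := ι g₀ * δ with hxdef
  have hinvθ : ∀ u : G, thetaX θ g₀ u⁻¹ = (thetaX θ g₀ u)⁻¹ := by
    intro u
    simp only [thetaX, map_inv, mul_inv_rev, inv_inv, mul_assoc]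
  have Fex : ∀ p : {y : Gh // (∃ h : G, y = ι h * δ) ∧ y ^ 2 = ι z},
      ∃ a : G, a * thetaX θ g₀ a = 1 ∧ (p : Gh) * x⁻¹ = ι a :=
    fun p => (part3 p).1 p.2
  let F : {y : Gh // (∃ h : G, y = ι h * δ) ∧ y ^ 2 = ι z} →
      {a : G // a * thetaX θ g₀ a = 1} :=
    fun p => ⟨(Fex p).choose, (Fex p).choose_spec.1⟩
  have hF : ∀ p : {y : Gh // (∃ h : G, y = ι h * δ) ∧ y ^ 2 = ι z},
      (p : Gh) * x⁻¹ = ι (F p : G) := fun p => (Fex p).choose_spec.2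
  have hFy : ∀ p : {y : Gh // (∃ h : G, y = ι h * δ) ∧ y ^ 2 = ι z},
      (p : Gh) = ι (F p : G) * x := by
    intro p
    rw [← hF p]; group
  let Gm : {a : G // a * thetaX θ g₀ a = 1} →
      {y : Gh // (∃ h : G, y = ι h * δ) ∧ y ^ 2 = ι z} :=
    fun q => ⟨ι (q : G) * x, (part3 _).2 ⟨q, q.2, by group⟩⟩
  have hGF : ∀ p, Gm (F p) = p := by
    intro p
    apply Subtype.ext
    exact (hFy p).symm
  have hFG : ∀ q, F (Gm q) = q := by
    intro q
    apply Subtype.ext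
    apply hι
    rw [← hF (Gm q)]
    show ι (q : G) * x * x⁻¹ = ι (q : G)
    group
  have hFd : ∀ p q : {y : Gh // (∃ h : G, y = ι h * δ) ∧ y ^ 2 = ι z},
      (∃ u : G, (q : Gh) = ι u * (p : Gh) * (ι u)⁻¹) →
      (∃ u : G, (F q : G) = u * (F p : G) * (thetaX θ g₀ u)⁻¹) := by
    rintro p q ⟨u, hu⟩
    refine ⟨u, hι ?_⟩
    have h2 : ι (thetaX θ g₀ u) = x * ι u * x⁻¹ := part2 u
    have h3 : (ι (thetaX θ g₀ u))⁻¹ = x * (ι u)⁻¹ * x⁻¹ := by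
      rw [h2]; group
    simp only [map_mul, map_inv]
    rw [← hF q, hu, ← hF p, h3]
    group
  have hGd : ∀ p q : {a : G // a * thetaX θ g₀ a = 1},
      (∃ u : G, (q : G) = u * (p : G) * (thetaX θ g₀ u)⁻¹) →
      (∃ u : G, (Gm q : Gh) = ι u * (Gm p : Gh) * (ι u)⁻¹) := by
    rintro p q ⟨u, hu⟩
    refine ⟨u, ?_⟩
    show ι (q : G) * x = ι u * (ι (p : G) * x) * (ι u)⁻¹
    rw [hu]
    simp only [map_mul, map_inv]
    have h2 : ι (thetaX θ g₀ u) = x * ι u * x⁻¹ := part2 u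
    have h3 : (ι (thetaX θ g₀ u))⁻¹ * x = x * (ι u)⁻¹ := by
      rw [h2]; group
    calc ι u * ι (p : G) * (ι (thetaX θ g₀ u))⁻¹ * x
        = ι u * ι (p : G) * ((ι (thetaX θ g₀ u))⁻¹ * x) := by group
    _ = ι u * ι (p : G) * (x * (ι u)⁻¹) := by rw [h3]
    _ = ι u * (ι (p : G) * x) * (ι u)⁻¹ := by group
  refine ⟨⟨Quot.map F hFd, Quot.map Gm hGd, ?_, ?_⟩, ?_⟩
  · intro q
    induction q using Quot.ind with
    | _ p => exact congrArg (Quot.mk _) (hGF p)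
  · intro q
    induction q using Quot.ind with
    | _ p => exact congrArg (Quot.mk _) (hFG p)
  · intro p a h hpa
    show Quot.mk _ (F p) = Quot.mk _ ⟨a, h⟩
    apply congrArg
    apply Subtype.ext
    apply hι
    rw [← hF p]
    exact hpa
end
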